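/- Let k and s be positive integers, let G be a simple graph, and let uv be an edge of G. If G contains no cycle of length at least k and no matching of size s+1, then the contracted graph G/uv contains no cycle of length at least k. -/

import Mathlib

/-- The simple graph obtained from `G` by contracting the edge `uv`: the vertex `v` is removed and
merged into `u`. -/
def contractEdge {V : Type*} (G : SimpleGraph V) (u v : V) : SimpleGraph {w : V // w ≠ v} where
  Adj a b := (a : V) ≠ (b : V) ∧
    (G.Adj a b ∨ ((a : V) = u ∧ G.Adj v b) ∨ ((b : V) = u ∧ G.Adj a v))
  symm := by
    constructor
    rintro a b ⟨hne, h | ⟨ha, h⟩ | ⟨hb, h⟩⟩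
    · exact ⟨hne.symm, Or.inl h.symm⟩
    · exact ⟨hne.symm, Or.inr (Or.inr ⟨ha, h.symm⟩)⟩
    · exact ⟨hne.symm, Or.inr (Or.inl ⟨hb, h.symm⟩)⟩
  loopless := by constructor; rintro a ⟨hne, -⟩; exact hne rfl

open SimpleGraph Walk

section aux
variable {V : Type*} {G : SimpleGraph V}

/-- Glue a path with two extra edges into a cycle. -/
lemma cycleGlue {w x y : V} (h1 : G.Adj w x) (R : G.Walk x y) (h2 : G.Adj y w)
    (hR : R.support.Nodup) (hw : w ∉ R.support) (hxy : x ≠ y) :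
    (Walk.cons h1 (R.concat h2)).IsCycle := by
  have hyw : y ≠ w := fun e => hw (e ▸ R.end_mem_support)
  rw [Walk.cons_isCycle_iff]
  constructor
  · rw [Walk.isPath_def, Walk.support_concat, List.nodup_append]
    refine ⟨hR, List.nodup_singleton w, ?_⟩
    intro z hz b hz' e
    rw [List.mem_singleton] at hz'
    exact hw (hz' ▸ e ▸ hz)
  · rw [Walk.edges_concat, List.concat_eq_append, List.mem_append]
    rintro (hmem | hmem)
    · exact hw (Walk.fst_mem_support_of_mem_edges R hmem)
    · rw [List.mem_singleton, Sym2.eq_iff] at hmem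
      rcases hmem with ⟨e1, e2⟩ | ⟨-, e2⟩
      · exact hyw e1.symm
      · exact hxy e2

/-- A loop walk with nodup support has length 0. -/
lemma loop_len {x : V} (r : G.Walk x x) (h : r.support.Nodup) : r.length = 0 := by
  cases r with
  | nil => rfl
  | cons h' p =>
    exfalso
    rw [Walk.support_cons, List.nodup_cons] at h
    exact h.1 p.end_mem_support

variable {u v : V}

/-- Lift a walk in the contraction whose darts are all `G`-edges. -/
def liftWalk : ∀ {a b : {w : V // w ≠ v}} (p : (contractEdge G u v).Walk a b),
    (∀ d ∈ p.darts, G.Adj d.fst.val d.snd.val) → G.Walk a.val b.val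
  | _, _, .nil, _ => .nil
  | _, _, .cons h p, hd =>
      .cons (hd _ List.mem_cons_self)
        (liftWalk p (fun d hdd => hd d (List.mem_cons_of_mem _ hdd)))

@[simp] lemma liftWalk_length {a b : {w : V // w ≠ v}} (p : (contractEdge G u v).Walk a b)
    (hd : ∀ d ∈ p.darts, G.Adj d.fst.val d.snd.val) : (liftWalk p hd).length = p.length := by
  induction p with
  | nil => rfl
  | cons h p ih => simp [liftWalk, ih]

@[simp] lemma liftWalk_support {a b : {w : V // w ≠ v}} (p : (contractEdge G u v).Walk a b)
    (hd : ∀ d ∈ p.darts, G.Adj d.fst.val d.snd.val) :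
    (liftWalk p hd).support = p.support.map Subtype.val := by
  induction p with
  | nil => rfl
  | cons h p ih => simp [liftWalk, ih]

/-- Key lemma: a cycle in the contraction based at `u` or avoiding `u` lifts to a cycle in `G`
of at least the same length. -/
lemma key (huv : G.Adj u v) (a : {w : V // w ≠ v})
    (c : (contractEdge G u v).Walk a a) (hc : c.IsCycle)
    (hside : (a : V) = u ∨ (⟨u, huv.ne⟩ : {w : V // w ≠ v}) ∉ c.support) :
    ∃ (b : V) (C : G.Walk b b), C.IsCycle ∧ c.length ≤ C.length := by
  have h3 := hc.three_le_length
  match c, hc, hside, h3 with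
  | .nil, hc, _, h3 => simp at h3
  | .cons h .nil, hc, _, h3 => simp at h3
  | .cons (v := x) h (.cons h' q'), hc, hside, h3 =>
    obtain ⟨y, r, h₂, hq⟩ := Walk.exists_cons_eq_concat h' q'
    rw [hq] at hc hside h3 ⊢
    -- now the cycle is `cons h (r.concat h₂)` with `h : Adj a x`, `r : Walk x y`, `h₂ : Adj y a`
    have htail : (r.support ++ [(a : {w : V // w ≠ v})]).Nodup := by
      have := hc.2
      simpa [Walk.support_concat, List.concat_eq_append] using this
    rw [List.nodup_append] at htail
    have hr_nodup : r.support.Nodup := htail.1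
    have ha_r : a ∉ r.support := fun hm => htail.2.2 a hm a (List.mem_singleton_self a) rfl
    have hU_r : (⟨u, huv.ne⟩ : {w : V // w ≠ v}) ∉ r.support := by
      rcases hside with h1 | h1
      · have : a = ⟨u, huv.ne⟩ := Subtype.ext h1
        exact this ▸ ha_r
      · intro hm
        apply h1
        simp only [Walk.support_cons, Walk.support_concat, List.concat_eq_append,
          List.mem_cons, List.mem_append]
        exact Or.inr (Or.inl hm)
    have mem_ne_u : ∀ z ∈ r.support, (z : V) ≠ u := by
      intro z hz hzu
      exact hU_r ((Subtype.ext hzu : z = ⟨u, huv.ne⟩) ▸ hz)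
    have hdarts : ∀ d ∈ r.darts, G.Adj d.fst.val d.snd.val := by
      intro d hd
      obtain ⟨hne, hadj | ⟨h1, -⟩ | ⟨h1, -⟩⟩ := d.adj
      · exact hadj
      · exact absurd h1 (mem_ne_u _ (r.dart_fst_mem_support_of_mem_darts hd))
      · exact absurd h1 (mem_ne_u _ (r.dart_snd_mem_support_of_mem_darts hd))
    set R := liftWalk r hdarts with hR
    have hRsupp : R.support = r.support.map Subtype.val := liftWalk_support r hdarts
    have hRlen : R.length = r.length := liftWalk_length r hdarts
    have hRnodup : R.support.Nodup := by
      rw [hRsupp]; exact hr_nodup.map Subtype.val_injective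
    have hv_R : v ∉ R.support := by
      rw [hRsupp]; rintro hm
      obtain ⟨z, -, hz⟩ := List.mem_map.mp hm
      exact z.2 hz
    have hu_not : u ∉ R.support := by
      rw [hRsupp]; rintro hm
      obtain ⟨z, hz, hz'⟩ := List.mem_map.mp hm
      exact mem_ne_u z hz hz'
    have ha_not : (a : V) ∉ R.support := by
      rw [hRsupp]; rintro hm
      obtain ⟨z, hz, hz'⟩ := List.mem_map.mp hm
      exact ha_r ((Subtype.ext hz' : z = a) ▸ hz)
    have hrlen_pos : r.length ≠ 0 := by
      simp only [Walk.length_cons, Walk.length_concat] at h3; omega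
    have hxy : x ≠ y := by
      rintro rfl
      exact hrlen_pos (loop_len r hr_nodup)
    have hxyv : (x : V) ≠ (y : V) := fun e => hxy (Subtype.ext e)
    have hy_ne_u : (y : V) ≠ u := mem_ne_u y r.end_mem_support
    have hx_ne_u : (x : V) ≠ u := mem_ne_u x r.start_mem_support
    have hlen : (Walk.cons h (r.concat h₂)).length = r.length + 2 := by
      simp [Walk.length_concat]
    -- analyze the two boundary edges
    obtain ⟨-, ca | ⟨cau, cav⟩ | ⟨cxu, -⟩⟩ := id h
    · obtain ⟨-, cb | ⟨cyu, -⟩ | ⟨cbu, cbv⟩⟩ := id h₂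
      -- case 1: both genuine edges
      · refine ⟨(a : V), Walk.cons ca (R.concat cb), ?_, ?_⟩
        · exact cycleGlue ca R cb hRnodup ha_not hxyv
        · simp [hlen, Walk.length_concat, hRlen]
      · exact absurd cyu hy_ne_u
      -- case 2: first genuine, second from v (so a = u)
      · have hau : (a : V) = u := cbu
        have ca' : G.Adj u (x : V) := hau ▸ ca
        refine ⟨v, Walk.cons huv.symm ((Walk.cons ca' R).concat cbv), ?_, ?_⟩
        · apply cycleGlue huv.symm (Walk.cons ca' R) cbv
          · rw [Walk.support_cons, List.nodup_cons]
            exact ⟨hau ▸ ha_not, hRnodup⟩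
          · rw [Walk.support_cons, List.mem_cons]
            rintro (e | e)
            · exact huv.ne' e
            · exact hv_R e
          · exact fun e => hy_ne_u e.symm
        · simp [hlen, Walk.length_concat, hRlen]
    · obtain ⟨-, cb | ⟨cyu, -⟩ | ⟨cbu, cbv⟩⟩ := id h₂
      -- case 3: first from v (so a = u), second genuine
      · have hau : (a : V) = u := cau
        have cb' : G.Adj (y : V) u := hau ▸ cb
        refine ⟨u, Walk.cons huv ((Walk.cons cav R).concat cb'), ?_, ?_⟩
        · apply cycleGlue huv (Walk.cons cav R) cb'
          · rw [Walk.support_cons, List.nodup_cons]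
            exact ⟨hv_R, hRnodup⟩
          · rw [Walk.support_cons, List.mem_cons]
            rintro (e | e)
            · exact huv.ne e
            · exact (hau ▸ ha_not) e
          · exact fun e => y.2 e.symm
        · simp [hlen, Walk.length_concat, hRlen]
      · exact absurd cyu hy_ne_u
      -- case 4: both from v
      · refine ⟨v, Walk.cons cav (R.concat cbv), ?_, ?_⟩
        · exact cycleGlue cav R cbv hRnodup hv_R hxyv
        · simp [hlen, Walk.length_concat, hRlen]
    · exact absurd cxu hx_ne_u

end aux

theorem stmt_5 {V : Type*} [Fintype V] (G : SimpleGraph V) (k s : ℕ) (hk : 1 ≤ k) (hs : 1 ≤ s)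
    (u v : V) (huv : G.Adj u v)
    (hcyc : ¬ ∃ (a : V) (c : G.Walk a a), c.IsCycle ∧ k ≤ c.length)
    (hmat : ∀ M : G.Subgraph, M.IsMatching → M.verts.ncard < 2 * (s + 1)) :
    ¬ ∃ (a : {w : V // w ≠ v}) (c : (contractEdge G u v).Walk a a), c.IsCycle ∧ k ≤ c.length := by
  classical
  rintro ⟨a, c, hc, hlen⟩
  by_cases hU : (⟨u, huv.ne⟩ : {w : V // w ≠ v}) ∈ c.support
  · set c' := c.rotate _ hU with hc'
    have hcyc' : c'.IsCycle := hc.rotate hU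
    have hlen' : c'.length = c.length := by
      have := (c.rotate_darts _ hU).perm.length_eq
      simpa only [Walk.length_darts] using this
    obtain ⟨b, C, hC, hCl⟩ := key huv _ c' hcyc' (Or.inl rfl)
    exact hcyc ⟨b, C, hC, le_trans (hlen'.symm ▸ hlen) hCl⟩
  · obtain ⟨b, C, hC, hCl⟩ := key huv a c hc (Or.inr hU)
    exact hcyc ⟨b, C, hC, le_trans hlen hCl⟩
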